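/- Let B, B' ⊆ {1,…,N} satisfy 1 ≤ r_N(B) ≤ (N+1)/2, 1 ≤ r_N(B') ≤ (N+1)/2 and B ∩ B' ≠ ∅. Let b and b' denote the left-most sites of B and B', respectively. Then at least one of the following holds: (i) there exists n ∈ {0,1} with s_b(B') = { x + nN : x ∈ s_{b'}(B') }; (ii) there exists m ∈ {0,1} with s_{b'}(B) = { x + mN : x ∈ s_b(B) }. (Lemma S-suppl-2 of the Supplemental Material.) -/
import Mathlib


/-- `projN N i` is the unique element of `{1, …, N}` congruent to `i` mod `N`. -/
def projN (N i : ℤ) : ℤ := (i - 1) % N + 1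

/-- The cut `s_n` of the chain: `s_n i = i` if `i ≥ n`, and `i + N` if `i < n`. -/
def cutN (N n i : ℤ) : ℤ := if n ≤ i then i else i + N

/-- The range `r(A) = max A - min A + 1` of a finite nonempty set, with `r(∅) = 0`. -/
def rng (A : Finset ℤ) : ℤ := if h : A.Nonempty then A.max' h - A.min' h + 1 else 0

/-- `r_N(A) = min over n ∈ {1,…,N} of r(s_n(A))`. -/
noncomputable def rN (N : ℤ) (A : Finset ℤ) : ℤ :=
  sInf ((fun n => rng (A.image (cutN N n))) '' Set.Icc 1 N)

private lemma cut_mem (N b r x : ℤ) (hN : 1 ≤ N) (hb1 : 1 ≤ b) (hbN : b ≤ N)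
    (hr : r ≤ N) (hx1 : 1 ≤ x) (hx2 : x ≤ N)
    (hmem : x ∈ (Finset.Icc b (b + r - 1)).image (projN N)) :
    cutN N b x ∈ Finset.Icc b (b + r - 1) := by
  simp only [Finset.mem_image, Finset.mem_Icc] at hmem
  obtain ⟨j, ⟨hj1, hj2⟩, hpj⟩ := hmem
  unfold projN at hpj
  have hpj' : (j - 1) % N = x - 1 := by linarith
  obtain ⟨k, hk⟩ : ∃ k : ℤ, j - x = N * k := by
    refine ⟨(j - 1) / N, ?_⟩
    have h := Int.mul_ediv_add_emod (j - 1) N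
    linarith
  have hk01 : k = 0 ∨ k = 1 := by
    have hlb : -N < j - x := by omega
    have hub : j - x < 2 * N := by omega
    rcases le_or_gt k (-1) with h | h
    · exfalso
      have := mul_le_mul_of_nonneg_left h (show (0:ℤ) ≤ N by omega)
      nlinarith
    · rcases le_or_gt 2 k with h2 | h2
      · exfalso
        have := mul_le_mul_of_nonneg_left h2 (show (0:ℤ) ≤ N by omega)
        nlinarith
      · omega
  rcases hk01 with rfl | rfl
  · rw [mul_zero] at hk
    rw [Finset.mem_Icc]; unfold cutN; split_ifs <;> omega
  · rw [mul_one] at hk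
    rw [Finset.mem_Icc]; unfold cutN; split_ifs <;> omega

private lemma main_half (N : ℤ) (hN : 1 ≤ N) (B B' : Finset ℤ)
    (hB : B ⊆ Finset.Icc 1 N) (hB' : B' ⊆ Finset.Icc 1 N)
    (b b' r r' : ℤ) (hr2 : 2 * r ≤ N + 1) (hr2' : 2 * r' ≤ N + 1)
    (hb1 : 1 ≤ b) (hbN : b ≤ N) (hb'1 : 1 ≤ b') (hb'N : b' ≤ N)
    (KB : ∀ x ∈ B, cutN N b x ∈ Finset.Icc b (b + r - 1))
    (KB' : ∀ x ∈ B', cutN N b' x ∈ Finset.Icc b' (b' + r' - 1))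
    (hle : b ≤ b') :
    (∃ n : ℤ, (n = 0 ∨ n = 1) ∧
        B'.image (cutN N b) = (B'.image (cutN N b')).image (fun x => x + n * N)) ∨
      (∃ m : ℤ, (m = 0 ∨ m = 1) ∧
        B.image (cutN N b') = (B.image (cutN N b)).image (fun x => x + m * N)) := by
  by_cases hy : ∃ y ∈ B', b ≤ y ∧ y < b'
  · obtain ⟨y, hyB, hy1, hy2⟩ := hy
    have hyI := KB' y hyB
    rw [Finset.mem_Icc] at hyI
    have hcut : cutN N b' y = y + N := by unfold cutN; split_ifs <;> omega
    rw [hcut] at hyI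
    right
    refine ⟨1, Or.inr rfl, ?_⟩
    rw [Finset.image_image]
    refine Finset.image_congr ?_
    intro x hx
    have hxI := KB x hx
    rw [Finset.mem_Icc] at hxI
    have hxN := hB hx
    rw [Finset.mem_Icc] at hxN
    simp only [Function.comp_apply, one_mul, cutN] at hxI ⊢
    split_ifs at hxI ⊢ <;> omega
  · push_neg at hy
    left
    refine ⟨0, Or.inl rfl, ?_⟩
    rw [Finset.image_image]
    refine Finset.image_congr ?_
    intro x hx
    have hxN := hB' hx
    rw [Finset.mem_Icc] at hxN
    have h' := hy x hx
    simp only [Function.comp_apply, zero_mul, add_zero, cutN]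
    split_ifs <;> omega

/-- Lemma S2 of the Supplemental Material: Let
`B, B' ⊆ {1,…,N}` with `1 ≤ r_N(B), r_N(B') ≤ (N+1)/2` and `B ∩ B' ≠ ∅`, and
let `b, b'` be the left-most sites of `B, B'`. Then either
`s_b(B') = s_{b'}(B') + nN` for some `n ∈ {0,1}`, or
`s_{b'}(B) = s_b(B) + mN` for some `m ∈ {0,1}`. -/
theorem simultaneous_cut (N : ℤ) (hN : 1 ≤ N) (B B' : Finset ℤ)
    (hB : B ⊆ Finset.Icc 1 N) (hB' : B' ⊆ Finset.Icc 1 N)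
    (h1 : 1 ≤ rN N B) (h2 : 2 * rN N B ≤ N + 1)
    (h1' : 1 ≤ rN N B') (h2' : 2 * rN N B' ≤ N + 1)
    (hint : (B ∩ B').Nonempty)
    (b : ℤ) (hbmem : b ∈ B) (hb1 : projN N (b + rN N B - 1) ∈ B)
    (hb2 : B ⊆ (Finset.Icc b (b + rN N B - 1)).image (projN N))
    (b' : ℤ) (hb'mem : b' ∈ B') (hb'1 : projN N (b' + rN N B' - 1) ∈ B')
    (hb'2 : B' ⊆ (Finset.Icc b' (b' + rN N B' - 1)).image (projN N)) :
    (∃ n : ℤ, (n = 0 ∨ n = 1) ∧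
        B'.image (cutN N b) = (B'.image (cutN N b')).image (fun x => x + n * N)) ∨
      (∃ m : ℤ, (m = 0 ∨ m = 1) ∧
        B.image (cutN N b') = (B.image (cutN N b)).image (fun x => x + m * N)) := by
  have hbI := hB hbmem
  rw [Finset.mem_Icc] at hbI
  have hb'I := hB' hb'mem
  rw [Finset.mem_Icc] at hb'I
  have KB : ∀ x ∈ B, cutN N b x ∈ Finset.Icc b (b + rN N B - 1) := by
    intro x hx
    have hxI := hB hx
    rw [Finset.mem_Icc] at hxI
    exact cut_mem N b (rN N B) x hN hbI.1 hbI.2 (by omega) hxI.1 hxI.2 (hb2 hx)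
  have KB' : ∀ x ∈ B', cutN N b' x ∈ Finset.Icc b' (b' + rN N B' - 1) := by
    intro x hx
    have hxI := hB' hx
    rw [Finset.mem_Icc] at hxI
    exact cut_mem N b' (rN N B') x hN hb'I.1 hb'I.2 (by omega) hxI.1 hxI.2 (hb'2 hx)
  rcases le_total b b' with h | h
  · exact main_half N hN B B' hB hB' b b' (rN N B) (rN N B') h2 h2'
      hbI.1 hbI.2 hb'I.1 hb'I.2 KB KB' h
  · exact (main_half N hN B' B hB' hB b' b (rN N B') (rN N B) h2' h2
      hb'I.1 hb'I.2 hbI.1 hbI.2 KB' KB h).symm
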